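/- For a Young diagram λ of size m, Σ_{|λ| = m} (f^λ)² = m!, where f^λ is the number of standard Young tableaux of shape λ. -/

import Mathlib

open Finset

namespace Stmt14

/-- `i` is a row of `μ` where a cell can be added. -/
def Add (μ : YoungDiagram) (i : ℕ) : Prop := i = 0 ∨ μ.rowLen i < μ.rowLen (i-1)

instance (μ : YoungDiagram) (i : ℕ) : Decidable (Add μ i) :=
  inferInstanceAs (Decidable (_ ∨ _))

theorem corner_not_mem (μ : YoungDiagram) (i : ℕ) : (i, μ.rowLen i) ∉ μ := by
  rw [YoungDiagram.mem_iff_lt_rowLen]; omega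

theorem add_lowerSet {μ : YoungDiagram} {i : ℕ} (h : Add μ i) :
    IsLowerSet (↑(insert (i, μ.rowLen i) μ.cells) : Set (ℕ × ℕ)) := by
  rintro ⟨x1, x2⟩ ⟨a, b⟩ hle hx
  obtain ⟨h1, h2⟩ := Prod.mk_le_mk.mp hle
  simp only [coe_insert, Set.mem_insert_iff, mem_coe, YoungDiagram.mem_cells] at hx ⊢
  rcases hx with heq | hx
  · injection heq with e1 e2
    by_cases ha : a = i
    · rcases Nat.lt_or_ge b (μ.rowLen i) with hb | hb
      · exact Or.inr (ha ▸ YoungDiagram.mem_iff_lt_rowLen.mpr hb)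
      · left; rw [Prod.mk.injEq]; omega
    · right
      have hai : a ≤ i - 1 := by omega
      have h3 := μ.rowLen_anti a (i - 1) hai
      rw [YoungDiagram.mem_iff_lt_rowLen]
      rcases h with h0 | hA
      · omega
      · omega
  · exact Or.inr (μ.up_left_mem h1 h2 hx)

/-- Add a cell at the end of row `i` (junk value `μ` if not addable). -/
def addCell (μ : YoungDiagram) (i : ℕ) : YoungDiagram :=
  if h : Add μ i then ⟨insert (i, μ.rowLen i) μ.cells, add_lowerSet h⟩ else μ

theorem cells_addCell {μ : YoungDiagram} {i : ℕ} (h : Add μ i) :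
    (addCell μ i).cells = insert (i, μ.rowLen i) μ.cells := by
  rw [addCell, dif_pos h]

theorem le_addCell {μ : YoungDiagram} {i : ℕ} (h : Add μ i) : μ ≤ addCell μ i := by
  rw [← YoungDiagram.cells_subset_iff, cells_addCell h]
  exact subset_insert _ _

theorem card_addCell {μ : YoungDiagram} {i : ℕ} (h : Add μ i) :
    (addCell μ i).card = μ.card + 1 := by
  show (addCell μ i).cells.card = μ.cells.card + 1
  rw [cells_addCell h, card_insert_of_notMem]
  exact fun hc => corner_not_mem μ i (YoungDiagram.mem_cells _ |>.mp hc)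

theorem cover_iff {μ ν : YoungDiagram} :
    μ ≤ ν ∧ ν.card = μ.card + 1 ↔ ∃ i, Add μ i ∧ ν = addCell μ i := by
  constructor
  · rintro ⟨hle, hcard⟩
    have hsub : μ.cells ⊆ ν.cells := YoungDiagram.cells_subset_iff.mpr hle
    have hd : (ν.cells \ μ.cells).card = 1 := by
      have h1 := card_sdiff_of_subset hsub
      have : μ.cells.card = μ.card := rfl
      have : ν.cells.card = ν.card := rfl
      omega
    obtain ⟨c, hc⟩ := card_eq_one.mp hd
    have hcmem : c ∈ ν.cells ∧ c ∉ μ.cells := by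
      have : c ∈ ν.cells \ μ.cells := hc ▸ mem_singleton_self c
      exact ⟨(mem_sdiff.mp this).1, (mem_sdiff.mp this).2⟩
    obtain ⟨i, j⟩ := c
    have hνcells : ν.cells = insert (i, j) μ.cells := by
      ext x
      simp only [mem_insert]
      constructor
      · intro hx
        by_cases hxμ : x ∈ μ.cells
        · exact Or.inr hxμ
        · left
          have : x ∈ ν.cells \ μ.cells := mem_sdiff.mpr ⟨hx, hxμ⟩
          rwa [hc, mem_singleton] at this
      · rintro (rfl | hx)
        · exact hcmem.1
        · exact hsub hx
    -- j = μ.rowLen i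
    have hjge : μ.rowLen i ≤ j := by
      have h2 := hcmem.2
      rw [YoungDiagram.mem_cells, YoungDiagram.mem_iff_lt_rowLen] at h2
      omega
    have hjle : j ≤ μ.rowLen i := by
      by_contra hlt
      push_neg at hlt
      have hmem : (i, j - 1) ∈ ν := ν.up_left_mem le_rfl (by omega) hcmem.1
      have hne : (i, j - 1) ∉ μ.cells := by
        rw [YoungDiagram.mem_cells, YoungDiagram.mem_iff_lt_rowLen]
        omega
      have hsd : (i, j - 1) ∈ ν.cells \ μ.cells := mem_sdiff.mpr ⟨hmem, hne⟩
      rw [hc, mem_singleton] at hsd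
      have : j - 1 = j := congrArg Prod.snd hsd
      omega
    have hj : j = μ.rowLen i := le_antisymm hjle hjge
    subst hj
    have hadd : Add μ i := by
      rcases Nat.eq_zero_or_pos i with h0 | hpos
      · exact Or.inl h0
      · right
        have hmem : (i - 1, μ.rowLen i) ∈ ν.cells :=
          ν.up_left_mem (by omega) le_rfl hcmem.1
        have hmm : (i - 1, μ.rowLen i) ∈ μ := by
          rw [hνcells] at hmem
          rcases mem_insert.mp hmem with heq | hx
          · exfalso
            have : i - 1 = i := congrArg Prod.fst heq
            omega
          · exact hx
        rw [YoungDiagram.mem_iff_lt_rowLen] at hmm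
        exact hmm
    refine ⟨i, hadd, ?_⟩
    ext1
    rw [cells_addCell hadd, hνcells]
  · rintro ⟨i, hadd, rfl⟩
    exact ⟨le_addCell hadd, card_addCell hadd⟩


/-- `i` is a row of `μ` with a removable corner. -/
def Rem (μ : YoungDiagram) (i : ℕ) : Prop := μ.rowLen (i+1) < μ.rowLen i

instance (μ : YoungDiagram) (i : ℕ) : Decidable (Rem μ i) :=
  inferInstanceAs (Decidable (_ < _))

theorem rem_lowerSet {μ : YoungDiagram} {i : ℕ} (h : Rem μ i) :
    IsLowerSet (↑(μ.cells.erase (i, μ.rowLen i - 1)) : Set (ℕ × ℕ)) := by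
  rintro ⟨x1, x2⟩ ⟨a, b⟩ hle hx
  obtain ⟨h1, h2⟩ := Prod.mk_le_mk.mp hle
  simp only [coe_erase, Set.mem_diff, mem_coe, YoungDiagram.mem_cells,
    Set.mem_singleton_iff] at hx ⊢
  obtain ⟨hxμ, hxne⟩ := hx
  refine ⟨μ.up_left_mem h1 h2 hxμ, ?_⟩
  intro heq
  injection heq with e1 e2
  subst e1; subst e2
  -- (x1,x2) ∈ μ, (x1,x2) ≠ (a,b), a ≤ x1, b ≤ x2 = μ.rowLen a - 1
  have hr0 : 0 < μ.rowLen a := by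
    have := μ.rowLen_anti (a+1) (a+1) le_rfl; unfold Rem at h; omega
  rcases Nat.lt_or_ge a x1 with hax | hax
  · have h3 := μ.rowLen_anti (a+1) x1 (by omega)
    rw [YoungDiagram.mem_iff_lt_rowLen] at hxμ
    unfold Rem at h
    omega
  · have e : a = x1 := by omega
    subst e
    rw [YoungDiagram.mem_iff_lt_rowLen] at hxμ
    apply hxne
    rw [Prod.mk.injEq]
    omega

/-- Remove the corner cell of row `i` (junk value `μ` if not removable). -/
def delCell (μ : YoungDiagram) (i : ℕ) : YoungDiagram :=
  if h : Rem μ i then ⟨μ.cells.erase (i, μ.rowLen i - 1), rem_lowerSet h⟩ else μ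

theorem cells_delCell {μ : YoungDiagram} {i : ℕ} (h : Rem μ i) :
    (delCell μ i).cells = μ.cells.erase (i, μ.rowLen i - 1) := by
  rw [delCell, dif_pos h]

theorem rowLen_pos_of_rem {μ : YoungDiagram} {i : ℕ} (h : Rem μ i) : 0 < μ.rowLen i := by
  unfold Rem at h; omega

theorem delCell_mem_cover {μ : YoungDiagram} {i : ℕ} (h : Rem μ i) :
    delCell μ i ≤ μ ∧ μ.card = (delCell μ i).card + 1 := by
  have hmem : (i, μ.rowLen i - 1) ∈ μ.cells := by
    rw [YoungDiagram.mem_cells, YoungDiagram.mem_iff_lt_rowLen]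
    have := rowLen_pos_of_rem h; omega
  constructor
  · rw [← YoungDiagram.cells_subset_iff, cells_delCell h]
    exact erase_subset _ _
  · show μ.cells.card = (delCell μ i).cells.card + 1
    rw [cells_delCell h, card_erase_of_mem hmem]
    have : 0 < μ.cells.card := card_pos.mpr ⟨_, hmem⟩
    omega

/-- Every lower cover of `μ` is obtained by removing a removable corner. -/
theorem cover_below {μ ρ : YoungDiagram} (hle : ρ ≤ μ) (hcard : μ.card = ρ.card + 1) :
    ∃ i, Rem μ i ∧ ρ = delCell μ i := by
  obtain ⟨i, hadd, rfl⟩ := cover_iff.mp ⟨hle, hcard⟩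
  have hcells := cells_addCell hadd
  have hnotmem := corner_not_mem ρ i
  -- row lengths of addCell ρ i
  have hrow : (addCell ρ i).rowLen i = ρ.rowLen i + 1 := by
    have h1 : (i, ρ.rowLen i) ∈ addCell ρ i := by
      rw [← YoungDiagram.mem_cells, hcells]; exact mem_insert_self _ _
    have h2 : (i, ρ.rowLen i + 1) ∉ addCell ρ i := by
      rw [← YoungDiagram.mem_cells, hcells, mem_insert]
      rintro (heq | hmem)
      · injection heq with e1 e2; omega
      · rw [YoungDiagram.mem_cells, YoungDiagram.mem_iff_lt_rowLen] at hmem; omega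
    rw [YoungDiagram.mem_iff_lt_rowLen] at h1 h2
    omega
  have hrow' : (addCell ρ i).rowLen (i+1) = ρ.rowLen (i+1) := by
    have hsub : ρ ≤ addCell ρ i := le_addCell hadd
    have h1 : ρ.rowLen (i+1) ≤ (addCell ρ i).rowLen (i+1) := by
      rcases Nat.eq_zero_or_pos (ρ.rowLen (i+1)) with h0 | hpos
      · omega
      · have : (i+1, ρ.rowLen (i+1) - 1) ∈ ρ := by
          rw [YoungDiagram.mem_iff_lt_rowLen]; omega
        have h5 := hsub this
        rw [YoungDiagram.mem_iff_lt_rowLen] at h5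
        omega
    have h2 : (addCell ρ i).rowLen (i+1) ≤ ρ.rowLen (i+1) := by
      rcases Nat.eq_zero_or_pos ((addCell ρ i).rowLen (i+1)) with h0 | hpos
      · omega
      · have hm : (i+1, (addCell ρ i).rowLen (i+1) - 1) ∈ (addCell ρ i).cells := by
          rw [YoungDiagram.mem_cells, YoungDiagram.mem_iff_lt_rowLen]; omega
        rw [hcells, mem_insert] at hm
        rcases hm with heq | hm
        · injection heq with e1 e2; omega
        · rw [YoungDiagram.mem_cells, YoungDiagram.mem_iff_lt_rowLen] at hm; omega
    omega
  have hrem : Rem (addCell ρ i) i := by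
    unfold Rem
    have := ρ.rowLen_anti i (i+1) (by omega)
    omega
  refine ⟨i, hrem, ?_⟩
  ext1
  rw [cells_delCell hrem, hcells, hrow]
  simp only [Nat.add_sub_cancel]
  rw [erase_insert (fun hc => hnotmem ((YoungDiagram.mem_cells _).mp hc))]

section Counting

variable (μ : YoungDiagram)

/-- Rows where a cell can be added. -/
def addRows : Finset ℕ := (range (μ.colLen 0 + 1)).filter (Add μ)

/-- Rows with a removable corner. -/
def remRows : Finset ℕ := (range (μ.colLen 0)).filter (Rem μ)

theorem rowLen_pos_iff {i : ℕ} : 0 < μ.rowLen i ↔ i < μ.colLen 0 := by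
  rw [← YoungDiagram.mem_iff_lt_colLen, YoungDiagram.mem_iff_lt_rowLen]

theorem mem_addRows {i : ℕ} : i ∈ addRows μ ↔ Add μ i := by
  rw [addRows, mem_filter, mem_range]
  refine ⟨fun h => h.2, fun h => ⟨?_, h⟩⟩
  rcases h with h0 | h
  · omega
  · have : 0 < μ.rowLen (i-1) := by omega
    rw [rowLen_pos_iff] at this
    omega

theorem mem_remRows {i : ℕ} : i ∈ remRows μ ↔ Rem μ i := by
  rw [remRows, mem_filter, mem_range]
  refine ⟨fun h => h.2, fun h => ⟨?_, h⟩⟩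
  have := rowLen_pos_of_rem h
  rwa [rowLen_pos_iff] at this

theorem addRows_eq : addRows μ = insert 0 ((remRows μ).image (· + 1)) := by
  ext i
  rw [mem_addRows, mem_insert, mem_image]
  constructor
  · intro h
    rcases h with h0 | h
    · exact Or.inl h0
    · rcases Nat.eq_zero_or_pos i with h0 | hpos
      · exact Or.inl h0
      · refine Or.inr ⟨i - 1, ?_, by omega⟩
        rw [mem_remRows]
        unfold Rem
        have : i - 1 + 1 = i := by omega
        rw [this]
        exact h
  · rintro (h0 | ⟨j, hj, rfl⟩)
    · exact Or.inl h0
    · rw [mem_remRows] at hj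
      right
      simpa [Nat.add_sub_cancel, Rem] using hj

theorem card_addRows : (addRows μ).card = (remRows μ).card + 1 := by
  rw [addRows_eq, card_insert_of_notMem, card_image_of_injective _ (add_left_injective 1)]
  simp

end Counting

theorem card_mono {μ ν : YoungDiagram} (h : μ ≤ ν) : μ.card ≤ ν.card :=
  card_le_card (YoungDiagram.cells_subset_iff.mpr h)

theorem eq_of_le_of_card_le {μ ν : YoungDiagram} (h : μ ≤ ν) (hc : ν.card ≤ μ.card) :
    μ = ν := by
  ext1
  exact eq_of_subset_of_card_le (YoungDiagram.cells_subset_iff.mpr h) hc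

theorem card_bot : (⊥ : YoungDiagram).card = 0 := by
  show (⊥ : YoungDiagram).cells.card = 0
  rw [YoungDiagram.cells_bot, card_empty]

theorem eq_bot_of_card {μ : YoungDiagram} (h : μ.card = 0) : μ = ⊥ := by
  ext1
  rw [YoungDiagram.cells_bot]
  exact card_eq_zero.mp h

theorem card_sup_add_card_inf (μ ν : YoungDiagram) :
    (μ ⊔ ν).card + (μ ⊓ ν).card = μ.card + ν.card := by
  show (μ ⊔ ν).cells.card + (μ ⊓ ν).cells.card = μ.cells.card + ν.cells.card
  rw [YoungDiagram.cells_sup, YoungDiagram.cells_inf]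
  exact card_union_add_card_inter _ _

instance : DecidableEq YoungDiagram := fun μ ν =>
  decidable_of_iff (μ.cells = ν.cells) (by rw [YoungDiagram.ext_iff])

/-- The set of diagrams covering `μ`. -/
def upSet (μ : YoungDiagram) : Finset YoungDiagram := (addRows μ).image (addCell μ)

/-- The set of diagrams covered by `μ`. -/
def downSet (μ : YoungDiagram) : Finset YoungDiagram := (remRows μ).image (delCell μ)

theorem mem_upSet {μ ν : YoungDiagram} : ν ∈ upSet μ ↔ μ ≤ ν ∧ ν.card = μ.card + 1 := by
  rw [upSet, mem_image]
  constructor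
  · rintro ⟨i, hi, rfl⟩
    rw [mem_addRows] at hi
    exact ⟨le_addCell hi, card_addCell hi⟩
  · intro h
    obtain ⟨i, hadd, rfl⟩ := cover_iff.mp h
    exact ⟨i, (mem_addRows μ).mpr hadd, rfl⟩

theorem mem_downSet {μ ρ : YoungDiagram} : ρ ∈ downSet μ ↔ ρ ≤ μ ∧ μ.card = ρ.card + 1 := by
  rw [downSet, mem_image]
  constructor
  · rintro ⟨i, hi, rfl⟩
    rw [mem_remRows] at hi
    exact delCell_mem_cover hi
  · intro h
    obtain ⟨i, hrem, rfl⟩ := cover_below h.1 h.2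
    exact ⟨i, (mem_remRows μ).mpr hrem, rfl⟩

theorem card_upSet (μ : YoungDiagram) : (upSet μ).card = (addRows μ).card := by
  rw [upSet]
  apply card_image_of_injOn
  intro i hi j hj hij
  rw [mem_coe, mem_addRows] at hi hj
  have h1 : (i, μ.rowLen i) ∈ (addCell μ i).cells := by
    rw [cells_addCell hi]; exact mem_insert_self _ _
  rw [hij, cells_addCell hj, mem_insert] at h1
  rcases h1 with heq | h1
  · exact congrArg Prod.fst heq
  · exact absurd ((YoungDiagram.mem_cells _).mp h1) (corner_not_mem μ i)

theorem card_downSet (μ : YoungDiagram) : (downSet μ).card = (remRows μ).card := by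
  rw [downSet]
  apply card_image_of_injOn
  intro i hi j hj hij
  rw [mem_coe, mem_remRows] at hi hj
  by_contra hne
  have hmem : (i, μ.rowLen i - 1) ∈ μ.cells := by
    rw [YoungDiagram.mem_cells, YoungDiagram.mem_iff_lt_rowLen]
    have := rowLen_pos_of_rem hi; omega
  have h1 : (i, μ.rowLen i - 1) ∉ (delCell μ i).cells := by
    rw [cells_delCell hi]; exact notMem_erase _ _
  have h2 : (i, μ.rowLen i - 1) ∈ (delCell μ j).cells := by
    rw [cells_delCell hj, mem_erase]
    exact ⟨fun heq => hne (congrArg Prod.fst heq), hmem⟩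
  rw [hij] at h1
  exact h1 h2

theorem card_upSet_self (μ : YoungDiagram) : (upSet μ).card = (downSet μ).card + 1 := by
  rw [card_upSet, card_downSet, card_addRows]

theorem card_inter_eq {μ ρ : YoungDiagram} (hne : ρ ≠ μ) (hcard : ρ.card = μ.card) :
    (upSet μ ∩ upSet ρ).card = (downSet μ ∩ downSet ρ).card := by
  set n := μ.card with hn
  have hsum := card_sup_add_card_inf μ ρ
  have hsupgt : n < (μ ⊔ ρ).card := by
    rcases Nat.lt_or_ge n ((μ ⊔ ρ).card) with h | h
    · exact h
    · exfalso
      have h1 : μ = μ ⊔ ρ := eq_of_le_of_card_le le_sup_left h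
      have h2 : ρ ≤ μ := h1 ▸ le_sup_right
      exact hne (eq_of_le_of_card_le h2 (by omega))
  have hpos : 1 ≤ n := by
    by_contra hc
    push_neg at hc
    interval_cases n
    exact hne ((eq_bot_of_card hcard).trans (eq_bot_of_card hn.symm).symm)
  by_cases hc : (μ ⊔ ρ).card = n + 1
  · have hinf : (μ ⊓ ρ).card = n - 1 := by omega
    have hU : upSet μ ∩ upSet ρ = {μ ⊔ ρ} := by
      ext ν
      rw [mem_inter, mem_upSet, mem_upSet, mem_singleton]
      constructor
      · rintro ⟨⟨h1, h2⟩, ⟨h3, h4⟩⟩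
        exact (eq_of_le_of_card_le (sup_le h1 h3) (by omega)).symm
      · rintro rfl
        exact ⟨⟨le_sup_left, by omega⟩, ⟨le_sup_right, by omega⟩⟩
    have hD : downSet μ ∩ downSet ρ = {μ ⊓ ρ} := by
      ext σ
      rw [mem_inter, mem_downSet, mem_downSet, mem_singleton]
      constructor
      · rintro ⟨⟨h1, h2⟩, ⟨h3, h4⟩⟩
        have h5 : σ ≤ μ ⊓ ρ := le_inf h1 h3
        exact eq_of_le_of_card_le h5 (by omega)
      · rintro rfl
        exact ⟨⟨inf_le_left, by omega⟩, ⟨inf_le_right, by omega⟩⟩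
    rw [hU, hD, card_singleton, card_singleton]
  · have hU : upSet μ ∩ upSet ρ = ∅ := by
      rw [eq_empty_iff_forall_notMem]
      intro ν hν
      rw [mem_inter, mem_upSet, mem_upSet] at hν
      obtain ⟨⟨h1, h2⟩, ⟨h3, h4⟩⟩ := hν
      have := card_mono (sup_le h1 h3)
      omega
    have hD : downSet μ ∩ downSet ρ = ∅ := by
      rw [eq_empty_iff_forall_notMem]
      intro σ hσ
      rw [mem_inter, mem_downSet, mem_downSet] at hσ
      obtain ⟨⟨h1, h2⟩, ⟨h3, h4⟩⟩ := hσ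
      have := card_mono (le_inf h1 h3)
      omega
    rw [hU, hD]

set_option maxHeartbeats 1000000 in
theorem key (below : YoungDiagram → Finset YoungDiagram)
    (hbelow : ∀ ν μ, μ ∈ below ν ↔ μ ≤ ν ∧ ν.card = μ.card + 1)
    (f : YoungDiagram → ℕ)
    (hf : ∀ ν, ν ≠ ⊥ → f ν = ∑ μ ∈ below ν, f μ)
    (level : ℕ → Finset YoungDiagram)
    (hlevel : ∀ m lam, lam ∈ level m ↔ lam.card = m) :
    ∀ n (μ : YoungDiagram), μ.card = n → ∑ ν ∈ upSet μ, f ν = (n + 1) * f μ := by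
  intro n
  induction n using Nat.strong_induction_on with
  | _ n IH =>
    intro μ hμ
    have hbe : ∀ ν, below ν = downSet ν := fun ν => by ext ρ; rw [hbelow, mem_downSet]
    have hDfilter : ∀ ν : YoungDiagram, ν.card = n + 1 →
        downSet ν = (level n).filter (fun ρ => ν ∈ upSet ρ) := by
      intro ν hν; ext ρ
      rw [mem_downSet, mem_filter, hlevel, mem_upSet]
      constructor
      · rintro ⟨h1, h2⟩; exact ⟨by omega, h1, by omega⟩
      · rintro ⟨h1, h2, h3⟩; exact ⟨h2, by omega⟩
    have hUfilter : ∀ σ : YoungDiagram, σ.card + 1 = n →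
        upSet σ = (level n).filter (fun ρ => σ ∈ downSet ρ) := by
      intro σ hσ; ext ρ
      rw [mem_upSet, mem_filter, hlevel, mem_downSet]
      constructor
      · rintro ⟨h1, h2⟩; exact ⟨by omega, h1, by omega⟩
      · rintro ⟨h1, h2, h3⟩; exact ⟨h2, by omega⟩
    calc ∑ ν ∈ upSet μ, f ν
        = ∑ ν ∈ upSet μ, ∑ ρ ∈ downSet ν, f ρ := by
          refine sum_congr rfl fun ν hν => ?_
          rw [mem_upSet] at hν
          have hne : ν ≠ ⊥ := by
            intro hbot
            rw [hbot, card_bot] at hν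
            omega
          rw [hf ν hne, hbe]
      _ = ∑ ν ∈ upSet μ, ∑ ρ ∈ level n, if ν ∈ upSet ρ then f ρ else 0 := by
          refine sum_congr rfl fun ν hν => ?_
          rw [mem_upSet] at hν
          rw [hDfilter ν (by omega), sum_filter]
      _ = ∑ ρ ∈ level n, ∑ ν ∈ upSet μ, if ν ∈ upSet ρ then f ρ else 0 := sum_comm
      _ = ∑ ρ ∈ level n, (upSet μ ∩ upSet ρ).card * f ρ := by
          refine sum_congr rfl fun ρ _ => ?_
          rw [← sum_filter, filter_mem_eq_inter, sum_const, smul_eq_mul]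
      _ = ∑ ρ ∈ level n, ((downSet μ ∩ downSet ρ).card * f ρ + if ρ = μ then f μ else 0) := by
          refine sum_congr rfl fun ρ hρ => ?_
          rw [hlevel] at hρ
          by_cases heq : ρ = μ
          · subst heq
            rw [if_pos rfl, inter_self, inter_self, card_upSet_self]
            ring
          · rw [if_neg heq, add_zero, card_inter_eq heq (by omega)]
      _ = (∑ ρ ∈ level n, (downSet μ ∩ downSet ρ).card * f ρ) + f μ := by
          rw [sum_add_distrib, sum_ite_eq' (level n) μ (fun _ => f μ),
            if_pos ((hlevel n μ).mpr hμ)]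
      _ = (∑ σ ∈ downSet μ, ∑ ρ ∈ upSet σ, f ρ) + f μ := by
          congr 1
          calc ∑ ρ ∈ level n, (downSet μ ∩ downSet ρ).card * f ρ
              = ∑ ρ ∈ level n, ∑ σ ∈ downSet μ, if σ ∈ downSet ρ then f ρ else 0 := by
                refine sum_congr rfl fun ρ _ => ?_
                rw [← sum_filter, filter_mem_eq_inter, sum_const, smul_eq_mul]
            _ = ∑ σ ∈ downSet μ, ∑ ρ ∈ level n, if σ ∈ downSet ρ then f ρ else 0 := sum_comm
            _ = ∑ σ ∈ downSet μ, ∑ ρ ∈ upSet σ, f ρ := by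
                refine sum_congr rfl fun σ hσ => ?_
                rw [mem_downSet] at hσ
                rw [hUfilter σ (by omega), sum_filter]
      _ = (∑ σ ∈ downSet μ, n * f σ) + f μ := by
          congr 1
          refine sum_congr rfl fun σ hσ => ?_
          rw [mem_downSet] at hσ
          have hlt : σ.card < n := by omega
          rw [IH σ.card hlt σ rfl]
          congr 1
          omega
      _ = n * f μ + f μ := by
          congr 1
          rw [← mul_sum]
          rcases Nat.eq_zero_or_pos n with h0 | hpos
          · rw [h0, Nat.zero_mul, Nat.zero_mul]
          · congr 1
            have hne : μ ≠ ⊥ := by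
              intro h; rw [h, card_bot] at hμ; omega
            rw [hf μ hne, hbe]
      _ = (n + 1) * f μ := by ring

end Stmt14

open Stmt14 in
/-- The RSK identity: `Σ_{|λ| = m} (f λ)² = m!`, where `f λ` is the number of
standard Young tableaux of shape `λ` (the path count in the Young graph). -/
theorem stmt14
    (below : YoungDiagram → Finset YoungDiagram)
    (hbelow : ∀ ν μ, μ ∈ below ν ↔ μ ≤ ν ∧ ν.card = μ.card + 1)
    (f : YoungDiagram → ℕ)
    (hf0 : f ⊥ = 1)
    (hf : ∀ ν, ν ≠ ⊥ → f ν = ∑ μ ∈ below ν, f μ)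
    (level : ℕ → Finset YoungDiagram)
    (hlevel : ∀ m lam, lam ∈ level m ↔ lam.card = m) :
    ∀ m, (∑ lam ∈ level m, (f lam) ^ 2) = Nat.factorial m := by
  intro m
  induction m with
  | zero =>
    have h0 : level 0 = {⊥} := by
      ext lam
      rw [hlevel, mem_singleton]
      constructor
      · exact fun h => eq_bot_of_card h
      · rintro rfl; exact card_bot
    rw [h0, sum_singleton, hf0]
    rfl
  | succ m ih =>
    have hDfilter : ∀ ν : YoungDiagram, ν.card = m + 1 →
        below ν = (level m).filter (fun ρ => ν ∈ upSet ρ) := by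
      intro ν hν; ext ρ
      rw [hbelow, mem_filter, hlevel, mem_upSet]
      constructor
      · rintro ⟨h1, h2⟩; exact ⟨by omega, h1, by omega⟩
      · rintro ⟨h1, h2, h3⟩; exact ⟨h2, by omega⟩
    calc ∑ ν ∈ level (m+1), f ν ^ 2
        = ∑ ν ∈ level (m+1), ∑ ρ ∈ below ν, f ν * f ρ := by
          refine sum_congr rfl fun ν hν => ?_
          rw [hlevel] at hν
          have hne : ν ≠ ⊥ := by
            intro h; rw [h, card_bot] at hν; omega
          rw [pow_two]
          nth_rewrite 2 [hf ν hne]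
          rw [mul_sum]
      _ = ∑ ν ∈ level (m+1), ∑ ρ ∈ level m, if ν ∈ upSet ρ then f ν * f ρ else 0 := by
          refine sum_congr rfl fun ν hν => ?_
          rw [hlevel] at hν
          rw [hDfilter ν hν, sum_filter]
      _ = ∑ ρ ∈ level m, ∑ ν ∈ level (m+1), if ν ∈ upSet ρ then f ν * f ρ else 0 := sum_comm
      _ = ∑ ρ ∈ level m, ∑ ν ∈ upSet ρ, f ν * f ρ := by
          refine sum_congr rfl fun ρ hρ => ?_
          rw [hlevel] at hρ
          rw [← sum_filter]
          congr 1
          ext ν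
          rw [mem_filter, hlevel, mem_upSet]
          constructor
          · rintro ⟨h1, h2, h3⟩; exact ⟨h2, by omega⟩
          · rintro ⟨h1, h2⟩; exact ⟨by omega, h1, by omega⟩
      _ = ∑ ρ ∈ level m, (m + 1) * f ρ ^ 2 := by
          refine sum_congr rfl fun ρ hρ => ?_
          rw [hlevel] at hρ
          rw [← sum_mul, key below hbelow f hf level hlevel m ρ hρ]
          ring
      _ = (m + 1) * ∑ ρ ∈ level m, f ρ ^ 2 := by rw [mul_sum]
      _ = Nat.factorial (m + 1) := by rw [ih, Nat.factorial_succ]
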